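/- For every integer k≥3, the F(k) sets R_{k−3,0}, R_{k−3,1}, …, R_{k−3,F(k−1)−1}, R_{k−2,0}, R_{k−2,1}, …, R_{k−2,F(k−2)−1} are pairwise disjoint and their union is ℕ (this is the k-th standard Fibonacci-like partition of the first kind). -/

import Mathlib

/-- The golden ratio φ = (1 + √5)/2. -/
noncomputable def phi : ℝ := (1 + Real.sqrt 5) / 2

/-- The lower Wythoff sequence a(n) = ⌊nφ⌋. -/
noncomputable def wa (n : ℕ) : ℕ := ⌊(n : ℝ) * phi⌋₊

/-- f_{i,j}(n) = F(i+1)·a(n) + F(i)·n − j. -/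
noncomputable def fij (i : ℕ) (j : ℤ) (n : ℕ) : ℤ :=
  (Nat.fib (i + 1) : ℤ) * wa n + (Nat.fib i : ℤ) * n - j

/-- R_{i,j} = { f_{i,j}(n) : n ∈ ℕ, n ≥ 1 }. -/
def R (i : ℕ) (j : ℤ) : Set ℤ := {m | ∃ n : ℕ, 0 < n ∧ fij i j n = m}

/-- The index set of the k-th standard Fibonacci-like partition of the first kind:
pairs (i, j) with i = k−3, 0 ≤ j ≤ F(k−1)−1 or i = k−2, 0 ≤ j ≤ F(k−2)−1. -/
def IdxFirst (k : ℕ) : Set (ℕ × ℤ) :=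
  {p | (p.1 = k - 3 ∧ 0 ≤ p.2 ∧ p.2 < (Nat.fib (k - 1) : ℤ)) ∨
       (p.1 = k - 2 ∧ 0 ≤ p.2 ∧ p.2 < (Nat.fib (k - 2) : ℤ))}


lemma phi_gt_one : 1 < phi := by
  rw [phi]
  have : (1:ℝ) < Real.sqrt 5 := by
    rw [show (1:ℝ) = Real.sqrt 1 by simp]
    exact Real.sqrt_lt_sqrt (by norm_num) (by norm_num)
  linarith

lemma phi_pos : 0 < phi := lt_trans one_pos phi_gt_one

lemma phi_irr : Irrational phi := by
  have h5 : Irrational (Real.sqrt 5) := by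
    rw [show (5:ℝ) = ((5:ℕ):ℝ) by norm_num, irrational_sqrt_natCast_iff]
    rintro ⟨x, hx⟩
    have hx4 : x ≤ 5 := by nlinarith
    interval_cases x <;> omega
  rw [phi]
  have := ((h5.ratCast_add (q := 1)).mul_ratCast (q := 1/2) (by norm_num))
  convert this using 1
  push_cast
  ring

lemma phi_sq : phi * phi = phi + 1 := by
  rw [phi]
  have h5 : Real.sqrt 5 * Real.sqrt 5 = 5 := Real.mul_self_sqrt (by norm_num)
  field_simp
  nlinarith [h5]

lemma phi_conj : phi.HolderConjugate (phi + 1) := by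
  rw [Real.holderConjugate_iff]
  constructor
  · exact phi_gt_one
  · have h0 : phi ≠ 0 := ne_of_gt phi_pos
    have h1 : phi + 1 ≠ 0 := by nlinarith [phi_pos]
    field_simp
    nlinarith [phi_sq]

lemma phi_lt_two : phi < 2 := by
  nlinarith [phi_sq, phi_gt_one, phi_pos]

lemma wa_cast (n : ℕ) : (wa n : ℤ) = ⌊(n : ℝ) * phi⌋ := by
  rw [wa, Int.natCast_floor_eq_floor]
  exact mul_nonneg (Nat.cast_nonneg n) phi_pos.le

lemma wa_frac {n : ℕ} (hn : 0 < n) :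
    (wa n : ℝ) < n * phi ∧ (n : ℝ) * phi < wa n + 1 := by
  have hirr : Irrational ((n : ℝ) * phi) := (phi_irr.natCast_mul hn.ne')
  have h1 : ((wa n : ℤ) : ℝ) ≤ n * phi := by rw [wa_cast]; exact Int.floor_le _
  have h2 : (n : ℝ) * phi < (wa n : ℤ) + 1 := by rw [wa_cast]; exact Int.lt_floor_add_one _
  have h3 : ((wa n : ℤ) : ℝ) ≠ n * phi := fun h => hirr.ne_int _ h.symm
  push_cast at h1 h2 h3 ⊢
  exact ⟨lt_of_le_of_ne h1 h3, h2⟩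

lemma wa_pos {n : ℕ} (hn : 0 < n) : 0 < wa n := by
  rw [wa, Nat.floor_pos]
  have : (1:ℝ) ≤ n := by exact_mod_cast hn
  nlinarith [phi_gt_one]

lemma wa_strictMono : StrictMono wa := by
  intro n m h
  have h1 : ((n:ℝ)+1) ≤ m := by exact_mod_cast h
  have hlt : (wa n : ℝ) + 1 ≤ (m:ℝ) * phi := by
    have h2 : (n:ℝ) * phi < wa n + 1 := by
      rcases Nat.eq_zero_or_pos n with h0 | h0
      · subst h0; simp [wa]
      · exact (wa_frac h0).2
    have h3 : (wa n : ℝ) ≤ n * phi := by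
      have := Int.floor_le ((n:ℝ) * phi)
      rw [← wa_cast] at this; exact_mod_cast this
    nlinarith [phi_gt_one, phi_pos, mul_le_mul_of_nonneg_right h1 phi_pos.le]
  have : (wa n + 1 : ℕ) ≤ wa m := by
    rw [wa]
    apply Nat.le_floor
    push_cast
    exact hlt
  omega

/-- a(a(n)) = a(n) + n - 1 -/
lemma waa {n : ℕ} (hn : 0 < n) : (wa (wa n) : ℤ) = wa n + n - 1 := by
  obtain ⟨h1, h2⟩ := wa_frac hn
  set θ : ℝ := n * phi - wa n with hθ
  have hθ0 : 0 < θ := by simp [hθ]; linarith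
  have hθ1 : θ < 1 := by simp [hθ]; linarith
  rw [wa_cast]
  have key : ((wa n : ℕ) : ℝ) * phi = (wa n : ℝ) + n - θ * (phi - 1) := by
    have : (wa n : ℝ) = n * phi - θ := by rw [hθ]; ring
    rw [this]; nlinarith [phi_sq]
  rw [key]
  have hb0 : 0 < θ * (phi - 1) := by nlinarith [phi_gt_one]
  have hb1 : θ * (phi - 1) < 1 := by nlinarith [phi_lt_two, phi_gt_one]
  rw [Int.floor_eq_iff]
  constructor
  · push_cast; nlinarith
  · push_cast; nlinarith

/-- a(b(n)) = 2a(n) + n -/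
lemma wab {n : ℕ} (hn : 0 < n) : (wa (wa n + n) : ℤ) = 2 * wa n + n := by
  obtain ⟨h1, h2⟩ := wa_frac hn
  set θ : ℝ := n * phi - wa n with hθ
  have hθ0 : 0 < θ := by simp [hθ]; linarith
  have hθ1 : θ < 1 := by simp [hθ]; linarith
  rw [wa_cast]
  have key : ((wa n + n : ℕ) : ℝ) * phi = 2 * (wa n : ℝ) + n + θ * (2 - phi) := by
    push_cast
    have hw : (wa n : ℝ) = n * phi - θ := by rw [hθ]; ring
    rw [hw]; nlinarith [phi_sq]
  rw [key]
  have hb0 : 0 < θ * (2 - phi) := by nlinarith [phi_lt_two]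
  have hb1 : θ * (2 - phi) < 1 := by nlinarith [phi_gt_one, phi_lt_two]
  rw [Int.floor_eq_iff]
  constructor
  · push_cast; nlinarith
  · push_cast; nlinarith

open scoped symmDiff

lemma memA {m : ℤ} : m ∈ {x | ∃ k : ℤ, k > 0 ∧ beattySeq phi k = x} ↔
    (∃ n : ℕ, 0 < n ∧ (wa n : ℤ) = m) := by
  constructor
  · rintro ⟨k, hk, rfl⟩
    refine ⟨k.toNat, by omega, ?_⟩
    rw [wa_cast, beattySeq]
    congr 2
    exact_mod_cast Int.toNat_of_nonneg hk.le
  · rintro ⟨n, hn, rfl⟩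
    refine ⟨n, by exact_mod_cast hn, ?_⟩
    rw [wa_cast, beattySeq]
    norm_num
lemma memB {m : ℤ} : m ∈ {x | ∃ k : ℤ, k > 0 ∧ beattySeq (phi + 1) k = x} ↔
    (∃ n : ℕ, 0 < n ∧ (wa n : ℤ) + n = m) := by
  have key : ∀ k : ℤ, beattySeq (phi + 1) k = ⌊(k:ℝ) * phi⌋ + k := by
    intro k
    rw [beattySeq, mul_add, mul_one, Int.floor_add_intCast]
  constructor
  · rintro ⟨k, hk, rfl⟩
    refine ⟨k.toNat, by omega, ?_⟩
    rw [key, wa_cast]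
    have : ((k.toNat : ℕ) : ℝ) = (k : ℝ) := by
      rw [← Int.cast_natCast, Int.toNat_of_nonneg hk.le]
    rw [this, Int.toNat_of_nonneg hk.le]
  · rintro ⟨n, hn, rfl⟩
    refine ⟨n, by exact_mod_cast hn, ?_⟩
    rw [key, wa_cast]
    norm_num

lemma beatty_cover (m : ℤ) (hm : 0 < m) :
    (∃ n : ℕ, 0 < n ∧ (wa n : ℤ) = m) ∨ (∃ n : ℕ, 0 < n ∧ (wa n : ℤ) + n = m) := by
  have h := Irrational.beattySeq_symmDiff_beattySeq_pos phi_conj phi_irr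
  have hm' : m ∈ ({beattySeq phi k | k > 0} ∆ {beattySeq (phi+1) k | k > 0}) := by
    rw [h]; exact hm
  rw [Set.mem_symmDiff] at hm'
  rcases hm' with ⟨h1, -⟩ | ⟨h1, -⟩
  · exact Or.inl (memA.mp h1)
  · exact Or.inr (memB.mp h1)

lemma beatty_not_both (m : ℤ) (h1 : ∃ n : ℕ, 0 < n ∧ (wa n : ℤ) = m)
    (h2 : ∃ n : ℕ, 0 < n ∧ (wa n : ℤ) + n = m) : False := by
  have hm : 0 < m := by
    obtain ⟨n, hn, rfl⟩ := h1
    exact_mod_cast wa_pos hn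
  have h := Irrational.beattySeq_symmDiff_beattySeq_pos phi_conj phi_irr
  have hm' : m ∈ ({beattySeq phi k | k > 0} ∆ {beattySeq (phi+1) k | k > 0}) := by
    rw [h]; exact hm
  rw [Set.mem_symmDiff] at hm'
  rcases hm' with ⟨-, hn1⟩ | ⟨-, hn1⟩
  · exact hn1 (memB.mpr h2)
  · exact hn1 (memA.mpr h1)

lemma fij_waa (i : ℕ) (j : ℤ) {m : ℕ} (hm : 0 < m) :
    fij i j (wa m) = fij (i + 1) (j + Nat.fib (i + 1)) m := by
  simp only [fij]
  rw [waa hm, show i + 1 + 1 = i + 2 from rfl, Nat.fib_add_two]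
  push_cast
  ring

lemma fij_wab (i : ℕ) (j : ℤ) {m : ℕ} (hm : 0 < m) :
    fij i j (wa m + m) = fij (i + 2) j m := by
  simp only [fij]
  rw [wab hm, show i + 2 + 1 = (i + 1) + 2 from rfl, Nat.fib_add_two,
    show i + 2 = i + 2 from rfl, Nat.fib_add_two]
  push_cast
  ring

lemma fij_strictMono (i : ℕ) (j : ℤ) : StrictMono (fij i j) := by
  intro n n' h
  simp only [fij]
  have hw : (wa n : ℤ) + 1 ≤ wa n' := by exact_mod_cast wa_strictMono h
  have hn : (n : ℤ) ≤ n' := by exact_mod_cast h.le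
  have hf1 : (1 : ℤ) ≤ (Nat.fib (i + 1) : ℤ) := by exact_mod_cast Nat.fib_pos.mpr (by omega)
  have hf0 : (0 : ℤ) ≤ (Nat.fib i : ℤ) := by positivity
  nlinarith [mul_le_mul_of_nonneg_left hw (by linarith : (0:ℤ) ≤ (Nat.fib (i+1) : ℤ)),
    mul_le_mul_of_nonneg_left hn hf0]

lemma R_subset_left (i : ℕ) (j : ℤ) : R (i + 1) (j + Nat.fib (i + 1)) ⊆ R i j := by
  rintro m ⟨n, hn, rfl⟩
  exact ⟨wa n, wa_pos hn, fij_waa i j hn⟩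

lemma R_subset_right (i : ℕ) (j : ℤ) : R (i + 2) j ⊆ R i j := by
  rintro m ⟨n, hn, rfl⟩
  exact ⟨wa n + n, by omega, fij_wab i j hn⟩

lemma R_split (i : ℕ) (j : ℤ) :
    R i j = R (i + 1) (j + Nat.fib (i + 1)) ∪ R (i + 2) j := by
  apply Set.Subset.antisymm
  · rintro m ⟨n, hn, rfl⟩
    have hn' : (0 : ℤ) < n := by exact_mod_cast hn
    rcases beatty_cover n hn' with ⟨m', hm', hem⟩ | ⟨m', hm', hem⟩
    · left
      have : wa m' = n := by exact_mod_cast hem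
      exact ⟨m', hm', by rw [← fij_waa i j hm', this]⟩
    · right
      have : wa m' + m' = n := by exact_mod_cast hem
      exact ⟨m', hm', by rw [← fij_wab i j hm', this]⟩
  · exact Set.union_subset (R_subset_left i j) (R_subset_right i j)

lemma R_split_disjoint (i : ℕ) (j : ℤ) (m : ℤ)
    (h1 : m ∈ R (i + 1) (j + Nat.fib (i + 1))) (h2 : m ∈ R (i + 2) j) : False := by
  obtain ⟨n1, hn1, he1⟩ := h1
  obtain ⟨n2, hn2, he2⟩ := h2
  have e1 : fij i j (wa n1) = m := by rw [fij_waa i j hn1]; exact he1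
  have e2 : fij i j (wa n2 + n2) = m := by rw [fij_wab i j hn2]; exact he2
  have : wa n1 = wa n2 + n2 := (fij_strictMono i j).injective (e1.trans e2.symm)
  exact beatty_not_both (wa n1) ⟨n1, hn1, rfl⟩ ⟨n2, hn2, by exact_mod_cast this.symm⟩

lemma fij_lb (i : ℕ) (j : ℤ) {n : ℕ} (hn : 0 < n) :
    (Nat.fib (i + 2) : ℤ) - j ≤ fij i j n := by
  simp only [fij]
  rw [Nat.fib_add_two]
  have hw : (1 : ℤ) ≤ wa n := by exact_mod_cast wa_pos hn
  have hn' : (1 : ℤ) ≤ n := by exact_mod_cast hn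
  have hf1 : (0 : ℤ) ≤ (Nat.fib (i + 1) : ℤ) := by positivity
  have hf0 : (0 : ℤ) ≤ (Nat.fib i : ℤ) := by positivity
  push_cast
  nlinarith [mul_le_mul_of_nonneg_left hw hf1, mul_le_mul_of_nonneg_left hn' hf0]

def Idx' (t : ℕ) : Set (ℕ × ℤ) :=
  {p | (p.1 = t ∧ 0 ≤ p.2 ∧ p.2 < (Nat.fib (t + 2) : ℤ)) ∨
       (p.1 = t + 1 ∧ 0 ≤ p.2 ∧ p.2 < (Nat.fib (t + 1) : ℤ))}

lemma fib_le_cast {a b : ℕ} (h : a ≤ b) : (Nat.fib a : ℤ) ≤ Nat.fib b := by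
  exact_mod_cast Nat.fib_mono h


lemma R_pos_idx (t : ℕ) (p : ℕ × ℤ) (hp : p ∈ Idx' t) (m : ℤ) (hm : m ∈ R p.1 p.2) :
    0 < m := by
  obtain ⟨n, hn, rfl⟩ := hm
  have hlb := fij_lb p.1 p.2 hn
  rcases hp with ⟨hp1, hp2, hp3⟩ | ⟨hp1, hp2, hp3⟩
  · rw [hp1] at hlb ⊢; linarith
  · rw [hp1] at hlb ⊢
    have h2 : (Nat.fib (t + 1) : ℤ) ≤ Nat.fib (t + 1 + 2) := fib_le_cast (by omega)
    linarith

lemma main_ind (t : ℕ) :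
    (∀ p ∈ Idx' t, ∀ q ∈ Idx' t, p ≠ q → ∀ m : ℤ, m ∈ R p.1 p.2 → m ∈ R q.1 q.2 → False) ∧
    (∀ m : ℤ, 0 < m → ∃ p ∈ Idx' t, m ∈ R p.1 p.2) := by
  induction t with
  | zero =>
    have hfib2 : ((Nat.fib (0 + 2) : ℕ) : ℤ) = 1 := by norm_num
    have hfib1 : ((Nat.fib (0 + 1) : ℕ) : ℤ) = 1 := by norm_num
    have hfix : ∀ r : ℕ × ℤ, r ∈ Idx' 0 → r = (0, 0) ∨ r = (1, 0) := by
      rintro ⟨r1, r2⟩ (⟨h1, h2, h3⟩ | ⟨h1, h2, h3⟩)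
      · rw [hfib2] at h3
        left; simp only [Prod.mk.injEq]
        exact ⟨h1, by omega⟩
      · rw [hfib1] at h3
        right; simp only [Prod.mk.injEq]
        exact ⟨h1, by omega⟩
    have hR0 : ∀ m : ℤ, m ∈ R 0 0 ↔ ∃ n : ℕ, 0 < n ∧ (wa n : ℤ) = m := by
      intro m
      simp [R, fij, Nat.fib_one, Nat.fib_zero]
    have hR1 : ∀ m : ℤ, m ∈ R 1 0 ↔ ∃ n : ℕ, 0 < n ∧ (wa n : ℤ) + n = m := by
      intro m
      simp [R, fij, Nat.fib_two, Nat.fib_one]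
    constructor
    · intro p hp q hq hpq m hmp hmq
      rcases hfix p hp with rfl | rfl <;> rcases hfix q hq with rfl | rfl
      · exact hpq rfl
      · exact beatty_not_both m ((hR0 m).mp hmp) ((hR1 m).mp hmq)
      · exact beatty_not_both m ((hR0 m).mp hmq) ((hR1 m).mp hmp)
      · exact hpq rfl
    · intro m hm
      rcases beatty_cover m hm with h | h
      · exact ⟨(0, 0), Or.inl ⟨rfl, le_refl 0, by omega⟩, (hR0 m).mpr h⟩
      · exact ⟨(1, 0), Or.inr ⟨rfl, le_refl 0, by omega⟩, (hR1 m).mpr h⟩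
  | succ t ih =>
    obtain ⟨ihD, ihU⟩ := ih
    have hFadd : (Nat.fib (t + 1 + 2) : ℤ) = (Nat.fib (t + 2) : ℤ) + (Nat.fib (t + 1) : ℤ) := by
      rw [Nat.fib_add_two]
      push_cast; ring
    have hF11 : (Nat.fib (t + 1 + 1) : ℤ) = (Nat.fib (t + 2) : ℤ) := by norm_num
    have hF1pos : 0 < (Nat.fib (t + 1) : ℤ) := by
      exact_mod_cast Nat.fib_pos.mpr (by omega)
    have hF12 : (Nat.fib (t + 1) : ℤ) ≤ (Nat.fib (t + 2) : ℤ) := fib_le_cast (by omega)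
    have hleft : ∀ (j : ℤ) (m : ℤ), m ∈ R (t + 1) (j + (Nat.fib (t + 1) : ℤ)) → m ∈ R t j :=
      fun j m h => R_subset_left t j h
    have hright : ∀ (j : ℤ) (m : ℤ), m ∈ R (t + 2) j → m ∈ R t j :=
      fun j m h => R_subset_right t j h
    have hIdxL : ∀ j : ℤ, 0 ≤ j → j < (Nat.fib (t + 2) : ℤ) → ((t, j) : ℕ × ℤ) ∈ Idx' t :=
      fun j h0 h1 => Or.inl ⟨rfl, h0, h1⟩
    have hIdxR : ∀ j : ℤ, 0 ≤ j → j < (Nat.fib (t + 1) : ℤ) → ((t + 1, j) : ℕ × ℤ) ∈ Idx' t :=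
      fun j h0 h1 => Or.inr ⟨rfl, h0, h1⟩
    constructor
    · rintro ⟨p1, p2⟩ hp ⟨q1, q2⟩ hq hpq m hmp hmq
      have classify : ∀ (r1 : ℕ) (r2 : ℤ), ((r1, r2) : ℕ × ℤ) ∈ Idx' (t + 1) →
          ∀ m' : ℤ, m' ∈ R r1 r2 →
          (r1 = t + 1 ∧ 0 ≤ r2 ∧ r2 < (Nat.fib (t + 1) : ℤ) ∧ m' ∈ R (t + 1) r2) ∨
          (∃ j : ℤ, 0 ≤ j ∧ j < (Nat.fib (t + 2) : ℤ) ∧ r1 = t + 1 ∧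
            r2 = j + (Nat.fib (t + 1) : ℤ) ∧ m' ∈ R (t + 1) (j + (Nat.fib (t + 1) : ℤ))) ∨
          (∃ j : ℤ, 0 ≤ j ∧ j < (Nat.fib (t + 2) : ℤ) ∧ r1 = t + 2 ∧
            r2 = j ∧ m' ∈ R (t + 2) j) := by
        rintro r1 r2 (⟨h1, h2, h3⟩ | ⟨h1, h2, h3⟩) m' hm'
        · by_cases hc : r2 < (Nat.fib (t + 1) : ℤ)
          · exact Or.inl ⟨h1, h2, hc, h1 ▸ hm'⟩
          · refine Or.inr (Or.inl ⟨r2 - (Nat.fib (t + 1) : ℤ), by omega, by omega, h1, by ring, ?_⟩)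
            have he : r2 - (Nat.fib (t + 1) : ℤ) + (Nat.fib (t + 1) : ℤ) = r2 := by ring
            rw [he]
            exact h1 ▸ hm'
        · refine Or.inr (Or.inr ⟨r2, h2, by omega, by omega, rfl, ?_⟩)
          have he : r1 = t + 2 := by omega
          exact he ▸ hm'
      have hC1 := classify p1 p2 hp m hmp
      have hC2 := classify q1 q2 hq m hmq
      clear classify hp hq hmp hmq
      have hne12 : ∀ j j' : ℤ, ((t + 1, j) : ℕ × ℤ) ≠ (t, j') := by
        intro j j' h
        simp only [Prod.mk.injEq] at h
        omega
      have hne21 : ∀ j j' : ℤ, ((t, j) : ℕ × ℤ) ≠ (t + 1, j') := by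
        intro j j' h
        simp only [Prod.mk.injEq] at h
        omega
      rcases hC1 with ⟨e1, e2, e3, hm1⟩ | ⟨j1, hj10, hj11, e1, e2, hm1⟩ |
          ⟨j1, hj10, hj11, e1, e2, hm1⟩ <;>
        rcases hC2 with ⟨f1, f2, f3, hm2⟩ | ⟨j2, hj20, hj21, f1, f2, hm2⟩ |
          ⟨j2, hj20, hj21, f1, f2, hm2⟩
      -- KK
      · have hne : p2 ≠ q2 := by
          intro h; exact hpq (by rw [e1, f1, h])
        exact ihD (t + 1, p2) (hIdxR p2 e2 e3) (t + 1, q2) (hIdxR q2 f2 f3)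
          (by simp only [ne_eq, Prod.mk.injEq]; tauto) m hm1 hm2
      -- KL
      · exact ihD (t + 1, p2) (hIdxR p2 e2 e3) (t, j2) (hIdxL j2 hj20 hj21)
          (hne12 p2 j2) m hm1 (hleft j2 m hm2)
      -- KR
      · exact ihD (t + 1, p2) (hIdxR p2 e2 e3) (t, j2) (hIdxL j2 hj20 hj21)
          (hne12 p2 j2) m hm1 (hright j2 m hm2)
      -- LK
      · exact ihD (t, j1) (hIdxL j1 hj10 hj11) (t + 1, q2) (hIdxR q2 f2 f3)
          (hne21 j1 q2) m (hleft j1 m hm1) hm2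
      -- LL
      · by_cases hc : j1 = j2
        · exact hpq (by rw [e1, f1, e2, f2, hc])
        · exact ihD (t, j1) (hIdxL j1 hj10 hj11) (t, j2) (hIdxL j2 hj20 hj21)
            (by simp only [ne_eq, Prod.mk.injEq]; tauto) m (hleft j1 m hm1) (hleft j2 m hm2)
      -- LR
      · by_cases hc : j1 = j2
        · subst hc
          exact R_split_disjoint t j1 m hm1 hm2
        · exact ihD (t, j1) (hIdxL j1 hj10 hj11) (t, j2) (hIdxL j2 hj20 hj21)
            (by simp only [ne_eq, Prod.mk.injEq]; tauto) m (hleft j1 m hm1) (hright j2 m hm2)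
      -- RK
      · exact ihD (t, j1) (hIdxL j1 hj10 hj11) (t + 1, q2) (hIdxR q2 f2 f3)
          (hne21 j1 q2) m (hright j1 m hm1) hm2
      -- RL
      · by_cases hc : j1 = j2
        · subst hc
          exact R_split_disjoint t j1 m hm2 hm1
        · exact ihD (t, j1) (hIdxL j1 hj10 hj11) (t, j2) (hIdxL j2 hj20 hj21)
            (by simp only [ne_eq, Prod.mk.injEq]; tauto) m (hright j1 m hm1) (hleft j2 m hm2)
      -- RR
      · by_cases hc : j1 = j2
        · exact hpq (by rw [e1, f1, e2, f2, hc])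
        · exact ihD (t, j1) (hIdxL j1 hj10 hj11) (t, j2) (hIdxL j2 hj20 hj21)
            (by simp only [ne_eq, Prod.mk.injEq]; tauto) m (hright j1 m hm1) (hright j2 m hm2)
    · intro m hm
      obtain ⟨⟨p1, p2⟩, hp, hmp⟩ := ihU m hm
      rcases hp with ⟨hp1, hp2, hp3⟩ | ⟨hp1, hp2, hp3⟩
      · have hp1' : p1 = t := hp1
        have hmp' : m ∈ R t p2 := by rw [← hp1']; exact hmp
        rw [R_split t p2] at hmp'
        rcases hmp' with h | h
        · exact ⟨(t + 1, p2 + (Nat.fib (t + 1) : ℤ)), Or.inl ⟨rfl, by omega, by omega⟩, h⟩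
        · exact ⟨(t + 2, p2), Or.inr ⟨rfl, hp2, by omega⟩, h⟩
      · have hp1' : p1 = t + 1 := hp1
        have hmp' : m ∈ R (t + 1) p2 := by rw [← hp1']; exact hmp
        exact ⟨(t + 1, p2), Or.inl ⟨rfl, hp2, by omega⟩, hmp'⟩

theorem stmt_2 (k : ℕ) (hk : 3 ≤ k) :
    (∀ p ∈ IdxFirst k, ∀ q ∈ IdxFirst k, p ≠ q → R p.1 p.2 ∩ R q.1 q.2 = ∅) ∧
    (⋃ p ∈ IdxFirst k, R p.1 p.2) = {m : ℤ | 0 < m} := by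
  obtain ⟨t, rfl⟩ : ∃ t, k = t + 3 := ⟨k - 3, by omega⟩
  have hIdx : IdxFirst (t + 3) = Idx' t := by
    have e3 : t + 3 - 3 = t := by omega
    have e2 : t + 3 - 2 = t + 1 := by omega
    have e1 : t + 3 - 1 = t + 2 := by omega
    simp only [IdxFirst, Idx', e1, e2, e3]
  obtain ⟨hD, hU⟩ := main_ind t
  rw [hIdx]
  constructor
  · intro p hp q hq hpq
    rw [Set.eq_empty_iff_forall_notMem]
    rintro m ⟨h1, h2⟩
    exact hD p hp q hq hpq m h1 h2
  · ext m
    simp only [Set.mem_iUnion, Set.mem_setOf_eq]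
    constructor
    · rintro ⟨p, hp, hm⟩
      exact R_pos_idx t p hp m hm
    · intro hm
      obtain ⟨p, hp, hm'⟩ := hU m hm
      exact ⟨p, hp, hm'⟩
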